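/- Let m be a positive square-free integer. Then for all integers n ≥ 1, ρ(n,m) ≤ ⌈n/m⌉^(φ(m)/m − 1). -/

import Mathlib

open Equiv Equiv.Perm Finset Nat

namespace RhoAux

/-- permutations of `Fin n` with order coprime to `m`. -/
noncomputable def A (n m : ℕ) : Finset (Perm (Fin n)) :=
  Finset.univ.filter (fun π : Perm (Fin n) => Nat.Coprime (orderOf π) m)

variable {N : ℕ}

/-- length of the cycle of `0`. -/
noncomputable def L (π : Perm (Fin (N+1))) : ℕ := orderOf (π.cycleOf 0)

lemma L_pos (π : Perm (Fin (N+1))) : 0 < L π := orderOf_pos _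

lemma cycleOf_pow_eq_one (π : Perm (Fin (N+1))) {d : ℕ} (hd : π ^ d = 1) :
    (π.cycleOf 0) ^ d = 1 := by
  ext y
  by_cases h : π.SameCycle 0 y
  · have : ((π.cycleOf 0) ^ d) y = y := by
      rw [h.cycleOf_eq, cycleOf_pow_apply_self, hd, Perm.one_apply]
    simp [this]
  · have : ((π.cycleOf 0) ^ d) y = y :=
      pow_apply_eq_self_of_apply_eq_self (cycleOf_apply_of_not_sameCycle h) d
    simp [this]

lemma L_dvd_orderOf (π : Perm (Fin (N+1))) : L π ∣ orderOf π :=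
  orderOf_dvd_of_pow_eq_one (cycleOf_pow_eq_one π (pow_orderOf_eq_one π))

lemma pow_L_apply_zero (π : Perm (Fin (N+1))) : (π ^ L π) 0 = 0 := by
  have h2 : π.cycleOf 0 ^ L π = 1 := pow_orderOf_eq_one _
  have h := cycleOf_pow_apply_self π 0 (L π)
  rw [h2] at h
  simpa using h.symm

lemma pow_mul_L_apply_zero (π : Perm (Fin (N+1))) (q : ℕ) : (π ^ (L π * q)) 0 = 0 := by
  induction q with
  | zero => simp
  | succ q ih => rw [Nat.mul_succ, pow_add, Perm.mul_apply, pow_L_apply_zero, ih]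

lemma pow_mod_L_apply_zero (π : Perm (Fin (N+1))) (i : ℕ) :
    (π ^ i) 0 = (π ^ (i % L π)) 0 := by
  conv_lhs => rw [← Nat.mod_add_div i (L π), pow_add, Perm.mul_apply,
    pow_mul_L_apply_zero]

lemma L_eq_one_iff (π : Perm (Fin (N+1))) : L π = 1 ↔ π 0 = 0 := by
  rw [L, orderOf_eq_one_iff, cycleOf_eq_one_iff]

lemma pow_ne_aux (π : Perm (Fin (N+1))) {i j : ℕ} (hij : i < j) (hj : j < L π) :
    (π ^ i) 0 ≠ (π ^ j) 0 := by
  intro hc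
  set c := π.cycleOf 0 with hcdef
  have hc' : (c ^ i) 0 = (c ^ j) 0 := by
    rw [cycleOf_pow_apply_self, cycleOf_pow_apply_self]; exact hc
  have hsplit : c ^ j = c ^ i * c ^ (j - i) := by
    rw [← pow_add]; congr 1; omega
  rw [hsplit, Perm.mul_apply] at hc'
  have h0 : (c ^ (j - i)) 0 = 0 := ((c ^ i).injective hc').symm
  have hπ0 : π 0 ≠ 0 := by
    intro h00
    have h1 : L π = 1 := (L_eq_one_iff π).mpr h00
    omega
  have hcyc : c.IsCycle := isCycle_cycleOf π hπ0
  have hne0 : c 0 ≠ 0 := by rw [hcdef, cycleOf_apply_self]; exact hπ0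
  have h1 : c ^ (j - i) = 1 := (hcyc.pow_eq_one_iff' hne0).mpr h0
  have hdvd := orderOf_dvd_of_pow_eq_one h1
  have : L π ≤ j - i := Nat.le_of_dvd (by omega) hdvd
  omega

lemma pow_injOn (π : Perm (Fin (N+1))) :
    Set.InjOn (fun i => (π ^ i) 0) (Finset.range (L π)) := by
  intro i hi j hj hij
  simp only [Finset.coe_range, Set.mem_Iio] at hi hj
  rcases lt_trichotomy i j with h | h | h
  · exact absurd hij (pow_ne_aux π h hj)
  · exact h
  · exact absurd hij.symm (pow_ne_aux π h hi)

/-- the cycle of `0` as a finset. -/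
noncomputable def O (π : Perm (Fin (N+1))) : Finset (Fin (N+1)) :=
  (Finset.range (L π)).image (fun i => (π ^ i) 0)

lemma card_O (π : Perm (Fin (N+1))) : (O π).card = L π := by
  rw [O, Finset.card_image_of_injOn (pow_injOn π), Finset.card_range]

lemma mem_O_iff (π : Perm (Fin (N+1))) (y : Fin (N+1)) :
    y ∈ O π ↔ π.SameCycle 0 y := by
  constructor
  · rintro hy
    simp only [O, Finset.mem_image] at hy
    obtain ⟨i, _, rfl⟩ := hy
    exact ⟨(i : ℤ), by simp⟩
  · intro h
    obtain ⟨i, _, _, hi⟩ := h.exists_pow_eq π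
    simp only [O, Finset.mem_image]
    exact ⟨i % L π, Finset.mem_range.mpr (Nat.mod_lt _ (L_pos π)),
      by rw [← pow_mod_L_apply_zero]; exact hi⟩

lemma zero_mem_O (π : Perm (Fin (N+1))) : 0 ∈ O π :=
  (mem_O_iff π 0).mpr (SameCycle.refl π 0)

lemma mem_O_apply_iff (π : Perm (Fin (N+1))) (y : Fin (N+1)) :
    π y ∈ O π ↔ y ∈ O π := by
  rw [mem_O_iff, mem_O_iff, sameCycle_apply_right]

lemma L_le (π : Perm (Fin (N+1))) : L π ≤ N + 1 := by
  rw [← card_O]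
  simpa using Finset.card_le_card (Finset.subset_univ (O π))


/-- complement of the cycle of 0 -/
noncomputable def Sc (π : Perm (Fin (N+1))) : Finset (Fin (N+1)) := (O π)ᶜ

lemma card_Sc (π : Perm (Fin (N+1))) : (Sc π).card = N + 1 - L π := by
  rw [Sc, Finset.card_compl, card_O]; simp

lemma mem_Sc_inv (π : Perm (Fin (N+1))) : ∀ y, (y ∈ Sc π) ↔ (π y ∈ Sc π) := fun y => by
  simp [Sc, Finset.mem_compl, mem_O_apply_iff]

lemma permCongr_pow {α β : Type*} (e : α ≃ β) (p : Perm α) (d : ℕ) :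
    (e.permCongr p) ^ d = e.permCongr (p ^ d) := by
  induction d with
  | zero => ext x; simp
  | succ d ih =>
    rw [pow_succ, pow_succ, ih]
    ext x; simp [Perm.mul_apply]

/-- the permutation induced on the complement, relabeled. -/
noncomputable def tau (π : Perm (Fin (N+1))) {d : ℕ} (h : (Sc π).card = d) : Perm (Fin d) :=
  ((Sc π).orderIsoOfFin h).toEquiv.symm.permCongr (π.subtypePerm (fun y => (mem_Sc_inv π y).symm))

lemma tau_orderOf_dvd (π : Perm (Fin (N+1))) {d : ℕ} (h : (Sc π).card = d) :
    orderOf (tau π h) ∣ orderOf π := by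
  apply orderOf_dvd_of_pow_eq_one
  rw [tau, permCongr_pow]
  have hσ : (π.subtypePerm (fun y => (mem_Sc_inv π y).symm)) ^ orderOf π = 1 := by
    rw [subtypePerm_pow]
    ext x
    simp [subtypePerm_apply, pow_orderOf_eq_one]
  rw [hσ]
  ext x; simp

lemma apply_eq_of_mem_Sc (π : Perm (Fin (N+1))) {d : ℕ} (h : (Sc π).card = d) {y : Fin (N+1)}
    (hy : y ∈ Sc π) :
    π y = ↑(((Sc π).orderIsoOfFin h) ((tau π h) ((((Sc π).orderIsoOfFin h)).symm ⟨y, hy⟩))) := by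
  simp [tau, permCongr_apply, subtypePerm_apply]

lemma oiso_congr {β : Type*} [LinearOrder β] {t t' : Finset β} (h : t = t') {d : ℕ}
    (c : t.card = d) (c' : t'.card = d) (i : Fin d) :
    (↑(t.orderIsoOfFin c i) : β) = ↑(t'.orderIsoOfFin c' i) := by subst h; rfl


lemma mem_A_iff {n mm : ℕ} (π : Perm (Fin n)) : π ∈ A n mm ↔ Nat.Coprime (orderOf π) mm := by
  simp [A]

lemma card_subtype_ne_zero : Fintype.card {y : Fin (N+1) // y ≠ 0} = N := by
  simp [Fintype.card_subtype_compl]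

lemma fiber_card (m k : ℕ) :
    ((A (N+1) m).filter (fun π => L π = k + 1)).card
      ≤ N.descFactorial k * (A (N - k) m).card := by
  classical
  set F := (A (N+1) m).filter (fun π => L π = k+1) with hF
  have hLp : ∀ π : Perm (Fin (N+1)), π ∈ F → L π = k + 1 := fun π hπ =>
    (Finset.mem_filter.mp hπ).2
  have hcop : ∀ π : Perm (Fin (N+1)), π ∈ F → Nat.Coprime (orderOf π) m := fun π hπ =>
    (mem_A_iff π).mp (Finset.mem_filter.mp hπ).1
  have hcard : ∀ π : Perm (Fin (N+1)), π ∈ F → (Sc π).card = N - k := by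
    intro π hπ; rw [card_Sc, hLp π hπ]; omega
  have hne : ∀ (π : Perm (Fin (N+1))) (hπ : π ∈ F) (i : Fin k), (π ^ ((i:ℕ)+1)) 0 ≠ 0 := by
    intro π hπ i hEq
    exact pow_ne_aux π (show 0 < (i:ℕ)+1 by omega)
      (by rw [hLp π hπ]; exact Nat.succ_lt_succ i.2) (by simp [hEq])
  have hinj : ∀ (π : Perm (Fin (N+1))) (hπ : π ∈ F), Function.Injective
      (fun i : Fin k => (⟨(π ^ ((i:ℕ)+1)) 0, hne π hπ i⟩ : {y : Fin (N+1) // y ≠ 0})) := by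
    intro π hπ i j hEq
    have h1 : (π ^ ((i:ℕ)+1)) 0 = (π ^ ((j:ℕ)+1)) 0 := congrArg Subtype.val hEq
    have h2 := pow_injOn π
      (Finset.mem_coe.mpr (Finset.mem_range.mpr (by rw [hLp π hπ]; exact Nat.succ_lt_succ i.2)))
      (Finset.mem_coe.mpr (Finset.mem_range.mpr (by rw [hLp π hπ]; exact Nat.succ_lt_succ j.2)))
      h1
    exact Fin.ext (by omega)
  let Φ : ↥F → (Fin k ↪ {y : Fin (N+1) // y ≠ 0}) × ↥(A (N-k) m) := fun p =>
    (⟨_, hinj p.1 p.2⟩, ⟨tau p.1 (hcard p.1 p.2), by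
      rw [mem_A_iff]
      exact Nat.Coprime.coprime_dvd_left (tau_orderOf_dvd p.1 (hcard p.1 p.2))
        (hcop p.1 p.2)⟩)
  have hΦinj : Function.Injective Φ := by
    rintro ⟨π, hπ⟩ ⟨π', hπ'⟩ hEq
    simp only [Φ, Prod.mk.injEq, Subtype.mk.injEq, Function.Embedding.mk.injEq] at hEq
    obtain ⟨hemb, htau⟩ := hEq
    have hfun : ∀ i : Fin k, (π ^ ((i:ℕ)+1)) 0 = (π' ^ ((i:ℕ)+1)) 0 := by
      intro i
      have := congrFun hemb i
      exact congrArg Subtype.val this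
    have hpow : ∀ i : ℕ, i ≤ k → (π ^ i) 0 = (π' ^ i) 0 := by
      intro i hi
      cases i with
      | zero => simp
      | succ j => exact hfun ⟨j, by omega⟩
    have hO : O π = O π' := by
      rw [O, O, hLp π hπ, hLp π' hπ']
      apply Finset.image_congr
      intro i hi
      simp only [Finset.coe_range, Set.mem_Iio] at hi
      exact hpow i (by omega)
    have hSc : Sc π = Sc π' := by rw [Sc, Sc, hO]
    have hmain : π = π' := by
      apply Equiv.ext
      intro y
      by_cases hy : y ∈ O π
      · rw [O, hLp π hπ] at hy
        obtain ⟨i, hi, rfl⟩ := Finset.mem_image.mp hy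
        rw [Finset.mem_range] at hi
        have e1 : π ((π ^ i) 0) = (π ^ (i+1)) 0 := by
          rw [_root_.pow_succ', Perm.mul_apply]
        have e1' : π' ((π' ^ i) 0) = (π' ^ (i+1)) 0 := by
          rw [_root_.pow_succ', Perm.mul_apply]
        have hyy : (π ^ i) 0 = (π' ^ i) 0 := hpow i (by omega)
        rw [e1, hyy, e1']
        by_cases hik : i + 1 ≤ k
        · exact hpow (i+1) hik
        · have hik' : i + 1 = k + 1 := by omega
          have z1 : (π ^ (k+1)) 0 = 0 := by rw [← hLp π hπ]; exact pow_L_apply_zero π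
          have z2 : (π' ^ (k+1)) 0 = 0 := by rw [← hLp π' hπ']; exact pow_L_apply_zero π'
          rw [hik', z1, z2]
      · have hy1 : y ∈ Sc π := by simp [Sc, Finset.mem_compl, hy]
        have hy2 : y ∈ Sc π' := by rw [← hSc]; exact hy1
        rw [apply_eq_of_mem_Sc π (hcard π hπ) hy1,
          apply_eq_of_mem_Sc π' (hcard π' hπ') hy2]
        set e := (Sc π).orderIsoOfFin (hcard π hπ) with he
        set e' := (Sc π').orderIsoOfFin (hcard π' hπ') with he'
        have hidx : (e.symm ⟨y, hy1⟩) = (e'.symm ⟨y, hy2⟩) := by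
          have h2 : (↑(e' (e.symm ⟨y,hy1⟩)) : Fin (N+1)) = y := by
            rw [← oiso_congr hSc (hcard π hπ) (hcard π' hπ') _]
            simp [he]
          have h3 : e' (e.symm ⟨y, hy1⟩) = ⟨y, hy2⟩ := Subtype.ext h2
          rw [← h3]; simp
        rw [hidx, htau]
        exact oiso_congr hSc (hcard π hπ) (hcard π' hπ') _
    exact Subtype.ext hmain
  calc F.card = Fintype.card ↥F := (Fintype.card_coe F).symm
    _ ≤ Fintype.card ((Fin k ↪ {y : Fin (N+1) // y ≠ 0}) × ↥(A (N-k) m)) :=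
        Fintype.card_le_of_injective Φ hΦinj
    _ = N.descFactorial k * (A (N - k) m).card := by
        rw [Fintype.card_prod, Fintype.card_embedding_eq, Fintype.card_coe,
          card_subtype_ne_zero, Fintype.card_fin]


lemma card_A_le (N m : ℕ) :
    (A (N+1) m).card ≤ ∑ k ∈ (Finset.range (N+1)).filter (fun k => Nat.Coprime (k+1) m),
      N.descFactorial k * (A (N-k) m).card := by
  classical
  have hmem : ∀ π ∈ A (N+1) m, L π - 1 ∈ Finset.range (N+1) := by
    intro π _
    have h1 := L_le π
    rw [Finset.mem_range]
    omega
  rw [Finset.card_eq_sum_card_fiberwise hmem]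
  have hfib : ∀ k, ((A (N+1) m).filter (fun π => L π - 1 = k))
      = ((A (N+1) m).filter (fun π => L π = k+1)) := by
    intro k
    ext π
    simp only [Finset.mem_filter, and_congr_right_iff]
    intro _
    have := L_pos π
    omega
  have hsub : (Finset.range (N+1)).filter (fun k => Nat.Coprime (k+1) m) ⊆ Finset.range (N+1) :=
    Finset.filter_subset _ _
  have hzero : ∀ k ∈ Finset.range (N+1),
      k ∉ (Finset.range (N+1)).filter (fun k => Nat.Coprime (k+1) m) →
      ((A (N+1) m).filter (fun π => L π - 1 = k)).card = 0 := by
    intro k hk hnk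
    simp only [Finset.mem_filter, hk, true_and] at hnk
    rw [hfib, Finset.card_eq_zero, Finset.filter_eq_empty_iff]
    intro π hπ hL
    apply hnk
    have hco := (mem_A_iff π).mp hπ
    rw [← hL]
    exact Nat.Coprime.coprime_dvd_left (L_dvd_orderOf π) hco
  rw [← Finset.sum_subset hsub hzero]
  apply Finset.sum_le_sum
  intro k _
  rw [hfib]
  exact fiber_card m k

end RhoAux

/-- `rho n m` is the proportion of permutations in `Sym(n)` whose order is coprime to `m`. -/
noncomputable def rho (n m : ℕ) : ℝ :=
  (Finset.univ.filter (fun π : Equiv.Perm (Fin n) => Nat.Coprime (orderOf π) m)).card /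
    (Nat.factorial n : ℝ)

namespace RhoAux

lemma rho_eq (n m : ℕ) : rho n m = ((A n m).card : ℝ) / n.factorial := rfl

lemma rho_nonneg (n m : ℕ) : 0 ≤ rho n m := by
  rw [rho_eq]
  positivity

lemma rho_le_one (n m : ℕ) : rho n m ≤ 1 := by
  rw [rho_eq, div_le_one (by positivity)]
  have h1 : (A n m).card ≤ (Finset.univ : Finset (Perm (Fin n))).card :=
    Finset.card_le_card (Finset.subset_univ _)
  have h2 : (Finset.univ : Finset (Perm (Fin n))).card = n.factorial := by
    rw [Finset.card_univ, Fintype.card_perm, Fintype.card_fin]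
  exact_mod_cast h2 ▸ h1

lemma rho_zero (m : ℕ) : rho 0 m = 1 := by
  rw [rho_eq]
  have : A 0 m = Finset.univ := by
    ext π
    simp only [mem_A_iff, Finset.mem_univ, iff_true]
    have : π = 1 := Subsingleton.elim π 1
    rw [this, orderOf_one]
    exact Nat.coprime_one_left m
  rw [this, Finset.card_univ, Fintype.card_perm, Fintype.card_fin]
  simp

lemma rec_rho (N m : ℕ) :
    ((N:ℝ)+1) * rho (N+1) m ≤
      ∑ k ∈ (Finset.range (N+1)).filter (fun k => Nat.Coprime (k+1) m), rho (N-k) m := by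
  classical
  set S := (Finset.range (N+1)).filter (fun k => Nat.Coprime (k+1) m) with hS
  have h := card_A_le N m
  have hcast : (((A (N+1) m).card : ℝ)) ≤
      ∑ k ∈ S, (N.descFactorial k : ℝ) * ((A (N-k) m).card : ℝ) := by
    exact_mod_cast h
  have hterm : ∀ k ∈ S, (N.descFactorial k : ℝ) * ((A (N-k) m).card : ℝ)
      = (N.factorial : ℝ) * rho (N-k) m := by
    intro k hk
    have hkN : k ≤ N := by
      have := Finset.mem_range.mp (Finset.filter_subset _ _ hk)
      omega
    have hfac := Nat.factorial_mul_descFactorial hkN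
    rw [rho_eq]
    have hne : ((N-k).factorial : ℝ) ≠ 0 := by
      exact_mod_cast (Nat.factorial_pos (N-k)).ne'
    field_simp
    push_cast [← hfac]
    ring
  rw [Finset.sum_congr rfl hterm, ← Finset.mul_sum] at hcast
  rw [rho_eq]
  have hfs : ((N+1).factorial : ℝ) = ((N:ℝ)+1) * (N.factorial : ℝ) := by
    rw [Nat.factorial_succ]
    push_cast
    ring
  rw [hfs]
  have hNf : (N.factorial : ℝ) > 0 := by exact_mod_cast Nat.factorial_pos N
  have heq : ((N:ℝ)+1) * ((((A (N+1) m).card : ℝ)) / (((N:ℝ)+1) * (N.factorial : ℝ))) =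
      (((A (N+1) m).card : ℝ)) / (N.factorial : ℝ) := by
    field_simp
  rw [heq, div_le_iff₀ hNf]
  linarith [hcast]

end RhoAux

namespace RhoAux2


/-- α - 1 -/
noncomputable def al (m : ℕ) : ℝ := (Nat.totient m : ℝ) / m - 1

/-- ⌈ j / m ⌉ -/
def cl (m j : ℕ) : ℕ := (j + m - 1) / m

noncomputable def g (m : ℕ) (x : ℕ) : ℝ := (x : ℝ) ^ (al m)

variable {m : ℕ}

lemma al_nonpos (hm : 1 ≤ m) : al m ≤ 0 := by
  rw [al, sub_nonpos, div_le_one (by exact_mod_cast hm)]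
  exact_mod_cast Nat.totient_le m

lemma alpha_pos (hm : 1 ≤ m) : 0 < (Nat.totient m : ℝ) / m := by
  apply _root_.div_pos
  · exact_mod_cast Nat.totient_pos.mpr hm
  · exact_mod_cast hm

lemma g_one : g m 1 = 1 := by simp [g, Real.one_rpow]

lemma g_le_one (hm : 1 ≤ m) {x : ℕ} (hx : 1 ≤ x) : g m x ≤ 1 :=
  Real.rpow_le_one_of_one_le_of_nonpos (by exact_mod_cast hx) (al_nonpos hm)

lemma g_nonneg (x : ℕ) : 0 ≤ g m x := Real.rpow_nonneg (by positivity) _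

lemma g_anti (hm : 1 ≤ m) {x y : ℕ} (hx : 1 ≤ x) (hxy : x ≤ y) : g m y ≤ g m x :=
  Real.rpow_le_rpow_of_nonpos (by exact_mod_cast hx) (by exact_mod_cast hxy) (al_nonpos hm)

/-- Bernoulli-type step : α * x^(α-1) ≤ x^α - (x-1)^α for real x ≥ 1, where α = φ(m)/m. -/
lemma bern (hm : 1 ≤ m) {x : ℝ} (hx : 1 ≤ x) :
    ((Nat.totient m : ℝ) / m) * x ^ (al m) ≤
      x ^ ((Nat.totient m : ℝ) / m) - (x - 1) ^ ((Nat.totient m : ℝ) / m) := by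
  set p : ℝ := (Nat.totient m : ℝ) / m with hp
  have hp0 : 0 < p := alpha_pos hm
  have hp1 : p ≤ 1 := by
    rw [hp, div_le_one (by exact_mod_cast hm)]
    exact_mod_cast Nat.totient_le m
  have hx0 : (0:ℝ) < x := lt_of_lt_of_le one_pos hx
  have h1 : (x - 1) ^ p = x ^ p * (1 - 1/x) ^ p := by
    rw [← Real.mul_rpow (le_of_lt hx0) (by rw [sub_nonneg]; exact div_le_one_of_le₀ hx (le_of_lt hx0))]
    congr 1
    field_simp
  have h2 : (1 - 1/x) ^ p ≤ 1 - p/x := by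
    have hs : (-1:ℝ) ≤ -(1/x) := by
      have : 1/x ≤ 1 := div_le_one_of_le₀ hx (le_of_lt hx0)
      linarith
    have := rpow_one_add_le_one_add_mul_self hs (le_of_lt hp0) hp1
    rw [show (1:ℝ) + -(1/x) = 1 - 1/x by ring] at this
    calc (1 - 1/x) ^ p ≤ 1 + p * (-(1/x)) := this
      _ = 1 - p/x := by ring
  have h3 : (x - 1) ^ p ≤ x ^ p - p * (x ^ p / x) := by
    rw [h1]
    have hxp : (0:ℝ) ≤ x ^ p := Real.rpow_nonneg (le_of_lt hx0) _
    calc x ^ p * (1 - 1/x) ^ p ≤ x ^ p * (1 - p/x) := by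
          apply mul_le_mul_of_nonneg_left h2 hxp
      _ = x ^ p - p * (x ^ p / x) := by ring
  have h4 : x ^ p / x = x ^ (al m) := by
    rw [al, ← hp, ← Real.rpow_sub_one (ne_of_gt hx0)]
  rw [h4] at h3
  linarith

/-- the crux inequality : φ(m) * Σ_{i<d} g(i+1) + 1 ≤ (m*d+1) * g(d+1). -/
lemma crux (hm2 : 2 ≤ m) (d : ℕ) :
    (Nat.totient m : ℝ) * (∑ i ∈ Finset.range d, g m (i+1)) + 1 ≤
      ((m:ℝ) * d + 1) * g m (d+1) := by
  have hm1 : 1 ≤ m := by omega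
  set p : ℝ := (Nat.totient m : ℝ) / m with hp
  have hp0 : 0 < p := alpha_pos hm1
  have hmR : (0:ℝ) < m := by exact_mod_cast (by omega : 0 < m)
  have hphi : (Nat.totient m : ℝ) = m * p := by
    rw [hp]; field_simp
  have hphi_le : (Nat.totient m : ℝ) ≤ (m:ℝ) - 1 := by
    have h2 : Nat.totient m + 1 ≤ m := Nat.totient_lt m hm2
    have h3 : (Nat.totient m : ℝ) + 1 ≤ (m:ℝ) := by exact_mod_cast h2
    linarith
  -- F i := (i:ℝ)^p ; telescoping
  set F : ℕ → ℝ := fun i => ((i:ℝ)) ^ p with hF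
  have hF0 : F 0 = 0 := by
    simp only [hF, Nat.cast_zero]
    exact Real.zero_rpow (ne_of_gt hp0)
  have hF1 : F 1 = 1 := by simp [hF]
  rcases Nat.eq_zero_or_pos d with hd | hd
  · subst hd
    simp [g_one]
  -- key per-term bound, i ≥ 1
  have hterm : ∀ i : ℕ, p * g m (i+1) ≤ F (i+1) - F i := by
    intro i
    have h0 : (0:ℝ) ≤ (i:ℝ) := Nat.cast_nonneg i
    have hx : (1:ℝ) ≤ ((i:ℝ)+1) := by linarith
    have hb := bern hm1 hx
    have e : (i:ℝ)+1-1 = (i:ℝ) := by ring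
    rw [e] at hb
    have hcast : (((i+1:ℕ)):ℝ) = (i:ℝ)+1 := by push_cast; ring
    have hgoal : p * (((i+1:ℕ)):ℝ) ^ al m ≤ (((i+1:ℕ)):ℝ) ^ p - ((i:ℕ):ℝ) ^ p := by
      rw [hcast, hp]
      exact hb
    simpa [g, hF] using hgoal
  -- telescoping over range d
  have htel : ∑ i ∈ Finset.range d, (F (i+1) - F i) = F d := by
    rw [Finset.sum_range_sub F d, hF0, sub_zero]
  -- split the first term
  have hsplit : ∑ i ∈ Finset.range d, g m (i+1)
      = g m 1 + ∑ i ∈ Finset.Ico 1 d, g m (i+1) := by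
    rw [Finset.range_eq_Ico, Finset.sum_eq_sum_Ico_succ_bot hd]
  have htel' : ∑ i ∈ Finset.Ico 1 d, (F (i+1) - F i) = F d - 1 := by
    have := htel
    rw [Finset.range_eq_Ico, Finset.sum_eq_sum_Ico_succ_bot hd] at this
    rw [hF1, hF0] at this
    linarith
  have hsum2 : p * ∑ i ∈ Finset.Ico 1 d, g m (i+1) ≤ F d - 1 := by
    rw [← htel', Finset.mul_sum]
    exact Finset.sum_le_sum (fun i _ => hterm i)
  -- last Bernoulli at x = d+1
  have hlast : p * g m (d+1) ≤ F (d+1) - F d := hterm d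
  have hFd1 : F (d+1) = ((d:ℝ)+1) * g m (d+1) := by
    have hne : ((d:ℝ)+1) ≠ 0 := by positivity
    have : g m (d+1) = F (d+1) / ((d:ℝ)+1) := by
      simp only [g, hF, al, ← hp]
      push_cast
      rw [Real.rpow_sub_one hne]
    rw [this]
    field_simp
  have hgle : g m (d+1) ≤ 1 := g_le_one hm1 (by omega)
  have hg0 : 0 ≤ g m (d+1) := g_nonneg _
  -- assemble
  have hA : (Nat.totient m : ℝ) * (∑ i ∈ Finset.range d, g m (i+1))
      ≤ (Nat.totient m : ℝ) + (m:ℝ) * (F d - 1) := by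
    rw [hsplit, g_one, mul_add, mul_one]
    have h5 : (Nat.totient m : ℝ) * ∑ i ∈ Finset.Ico 1 d, g m (i+1)
        = (m:ℝ) * (p * ∑ i ∈ Finset.Ico 1 d, g m (i+1)) := by
      rw [← mul_assoc, ← hphi]
    rw [h5]
    have h6 : 0 ≤ (m:ℝ) := le_of_lt hmR
    nlinarith [hsum2]
  have hB : (m:ℝ) * F d ≤ (m:ℝ) * ((d:ℝ)+1) * g m (d+1) - (Nat.totient m : ℝ) * g m (d+1) := by
    have : (m:ℝ) * (p * g m (d+1)) ≤ (m:ℝ) * (F (d+1) - F d) := by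
      apply mul_le_mul_of_nonneg_left hlast (le_of_lt hmR)
    rw [← mul_assoc, ← hphi] at this
    rw [hFd1] at this
    nlinarith []
  have hC : ((Nat.totient m : ℝ) - m + 1) * (1 - g m (d+1)) ≤ 0 :=
    mul_nonpos_of_nonpos_of_nonneg (by linarith) (by linarith)
  nlinarith [hA, hB, hC]

variable {m : ℕ}

lemma cl_facts (hm : 1 ≤ m) (n : ℕ) : m * cl m n + m > n + m - 1 ∧ m * cl m n ≤ n + m - 1 := by
  have h1 := Nat.div_add_mod (n + m - 1) m
  have h2 : (n + m - 1) % m < m := Nat.mod_lt _ (by omega)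
  unfold cl
  omega

lemma le_m_mul_cl (hm : 1 ≤ m) {n : ℕ} (hn : 1 ≤ n) : n ≤ m * cl m n := by
  have := cl_facts hm n
  omega

lemma m_mul_cl_le (hm : 1 ≤ m) {n : ℕ} (hn : 1 ≤ n) : m * cl m n ≤ n + m - 1 :=
  (cl_facts hm n).2

lemma cl_one_of_le (hm : 1 ≤ m) {n : ℕ} (hn1 : 1 ≤ n) (hnm : n ≤ m) : cl m n = 1 := by
  unfold cl
  have h1 : 1 ≤ (n + m - 1) / m := by
    rw [Nat.one_le_div_iff (by omega)]
    omega
  have h2 : (n + m - 1) / m < 2 := by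
    rw [Nat.div_lt_iff_lt_mul (by omega : 0 < m)]
    omega
  omega

lemma cl_two_of_gt (hm : 1 ≤ m) {n : ℕ} (hnm : m < n) : 2 ≤ cl m n := by
  unfold cl
  rw [Nat.le_div_iff_mul_le (by omega : 0 < m)]
  omega

lemma cl_helper (hm : 1 ≤ m) {q s j : ℕ} (h : j = m * q + s) (h2 : s < m) (h3 : s ≠ 0) :
    cl m j = q + 1 := by
  have e2 : m * (q + 1) = m * q + m := by ring
  have e : m * q + s + m - 1 = m * (q + 1) + (s - 1) := by rw [e2]; omega
  rw [h, cl, e, Nat.mul_add_div (by omega), Nat.div_eq_of_lt (by omega), Nat.add_zero]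

lemma cl_eq_div_add_one (hm : 1 ≤ m) {j : ℕ} (hnd : ¬ m ∣ j) : cl m j = j/m + 1 :=
  cl_helper hm (Nat.div_add_mod j m).symm (Nat.mod_lt _ (by omega))
    (fun h => hnd (Nat.dvd_of_mod_eq_zero h))

lemma cl_mul (hm : 1 ≤ m) (i : ℕ) : cl m (m * i) = i := by
  have e : m * i + m - 1 = m * i + (m - 1) := by omega
  rw [cl, e, Nat.mul_add_div (by omega), Nat.div_eq_of_lt (by omega), Nat.add_zero]

lemma div_window (hm : 1 ≤ m) {j i : ℕ} (h : j / m = i) : m * i ≤ j ∧ j < m * i + m := by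
  have h1 := Nat.div_add_mod j m
  have h2 : j % m < m := Nat.mod_lt _ (by omega)
  rw [h] at h1
  omega

lemma Jcard_small (hm0 : 0 < m) {N d : ℕ} (J : Finset ℕ)
    (hJmem : ∀ j ∈ J, j < N + 1 ∧ Nat.Coprime (N+1-j) m)
    (hmd : m * d ≤ N) {i : ℕ} (hi : i < d) :
    ((J.filter (fun j => j/m = i)).card) ≤ Nat.totient m := by
  classical
  obtain ⟨X, hX⟩ : ∃ X, X = m * i := ⟨_, rfl⟩
  have hbig : X + m ≤ N := by
    have hmi : m * (i+1) ≤ m * d := Nat.mul_le_mul_left m (by omega)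
    have e : m * (i+1) = m * i + m := by ring
    omega
  obtain ⟨t, ht⟩ : ∃ t, t + (X + m) = N + 2 :=
    ⟨N + 2 - (X + m), by clear * - hbig; omega⟩
  rw [← Nat.filter_coprime_Ico_eq_totient m t]
  apply Finset.card_le_card_of_injOn (fun j => N + 1 - j)
  · intro j hj
    simp only [Finset.mem_coe, Finset.mem_filter] at hj
    obtain ⟨hjJ, hji⟩ := hj
    have hw := div_window (by omega) hji
    rw [← hX] at hw
    have hjN := (hJmem j hjJ).1
    have hco := (hJmem j hjJ).2
    simp only [Finset.mem_coe, Finset.mem_filter, Finset.mem_Ico]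
    refine ⟨⟨?_, ?_⟩, hco.symm⟩
    · clear * - ht hw hjN hbig; omega
    · clear * - ht hw hjN hbig; omega
  · intro j hj j' hj' hEq
    simp only [Finset.coe_filter, Set.mem_setOf_eq] at hj hj'
    have h1 := (hJmem j hj.1).1
    have h2 := (hJmem j' hj'.1).1
    have hEq' : N + 1 - j = N + 1 - j' := hEq
    clear * - h1 h2 hEq'
    omega

lemma Jcard_last (hm0 : 0 < m) {N d : ℕ} (J : Finset ℕ)
    (hJmem : ∀ j ∈ J, j < N + 1 ∧ Nat.Coprime (N+1-j) m) :
    ((J.filter (fun j => j/m = d)).card) ≤ N + 1 - m * d := by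
  classical
  have hsub : J.filter (fun j => j/m = d) ⊆ Finset.Ico (m*d) (N+1) := by
    intro j hj
    simp only [Finset.mem_filter] at hj
    have hw := div_window (by omega) hj.2
    have hjN := (hJmem j hj.1).1
    simp only [Finset.mem_Ico]
    omega
  calc ((J.filter (fun j => j/m = d)).card) ≤ (Finset.Ico (m*d) (N+1)).card :=
        Finset.card_le_card hsub
    _ = N + 1 - m * d := Nat.card_Ico _ _

theorem main_ge2 (hm2 : 2 ≤ m) : ∀ n, 1 ≤ n → rho n m ≤ g m (cl m n) := by
  intro n
  induction n using Nat.strong_induction_on with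
  | _ n IH =>
  intro hn
  have hm1 : 1 ≤ m := by omega
  have hm0 : 0 < m := by omega
  by_cases hcase : n ≤ m
  · rw [cl_one_of_le hm1 hn hcase, g_one]; exact RhoAux.rho_le_one n m
  push_neg at hcase
  obtain ⟨N, rfl⟩ : ∃ N, n = N + 1 := ⟨n - 1, by omega⟩
  obtain ⟨d, hd⟩ : ∃ d, cl m (N+1) = d + 1 :=
    ⟨cl m (N+1) - 1, by have := cl_two_of_gt hm1 hcase; omega⟩
  have hd1 : 1 ≤ d := by have := cl_two_of_gt hm1 hcase; omega
  have hn1 : (1:ℕ) ≤ N + 1 := by omega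
  have hub : N + 1 ≤ m * (d+1) := by
    have := le_m_mul_cl hm1 hn1
    rw [hd] at this; exact this
  have hlb : m * d < N + 1 := by
    have h := m_mul_cl_le hm1 hn1
    rw [hd] at h
    have e : m * (d+1) = m*d + m := by ring
    omega
  classical
  set S := (Finset.range (N+1)).filter (fun k => Nat.Coprime (k+1) m) with hS
  set J := (Finset.range (N+1)).filter (fun j => Nat.Coprime (N+1-j) m) with hJ
  set Fn : ℕ → ℝ := fun j => if j = 0 then 1 else g m (cl m j) with hFn
  have hJmem : ∀ j ∈ J, j < N + 1 ∧ Nat.Coprime (N+1-j) m := by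
    intro j hj
    simpa [hJ, Finset.mem_filter, Finset.mem_range] using hj
  have hrec := RhoAux.rec_rho N m
  have hbound : ∀ k ∈ S, rho (N-k) m ≤ Fn (N-k) := by
    intro k hk
    rcases Nat.eq_zero_or_pos (N-k) with h0 | h1
    · rw [h0, RhoAux.rho_zero]; simp [hFn]
    · have hlt : N - k < N + 1 := by clear * - ; omega
      have := IH (N-k) hlt h1
      simp only [hFn]
      rw [if_neg (by clear * - h1; omega)]
      exact this
  have step1 : ((N:ℝ)+1) * rho (N+1) m ≤ ∑ k ∈ S, Fn (N-k) :=
    le_trans hrec (Finset.sum_le_sum hbound)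
  have hreindex : ∑ k ∈ S, Fn (N-k) = ∑ j ∈ J, Fn j := by
    refine Finset.sum_nbij' (fun k => N - k) (fun j => N - j) ?_ ?_ ?_ ?_ ?_
    · intro k hk
      simp only [hS, Finset.mem_filter, Finset.mem_range] at hk
      obtain ⟨hk1, hk2⟩ := hk
      show N - k ∈ J
      simp only [hJ, Finset.mem_filter, Finset.mem_range]
      refine ⟨by clear * - ; omega, ?_⟩
      have e : N + 1 - (N - k) = k + 1 := by clear * - hk1; omega
      rw [e]; exact hk2
    · intro j hj
      simp only [hJ, Finset.mem_filter, Finset.mem_range] at hj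
      obtain ⟨hj1, hj2⟩ := hj
      show N - j ∈ S
      simp only [hS, Finset.mem_filter, Finset.mem_range]
      refine ⟨by clear * - ; omega, ?_⟩
      have e : N - j + 1 = N + 1 - j := by clear * - hj1; omega
      rw [e]; exact hj2
    · intro k hk
      simp only [hS, Finset.mem_filter, Finset.mem_range] at hk
      obtain ⟨hk1, -⟩ := hk
      show N - (N - k) = k
      clear * - hk1; omega
    · intro j hj
      simp only [hJ, Finset.mem_filter, Finset.mem_range] at hj
      obtain ⟨hj1, -⟩ := hj
      show N - (N - j) = j
      clear * - hj1; omega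
    · intro k _; rfl
  set G : ℕ → ℝ := fun j => g m (j/m + 1) with hG
  have hFG : ∀ j, ¬ (m ∣ j ∧ j ≠ 0) → Fn j = G j := by
    intro j hj
    by_cases h0 : j = 0
    · subst h0; simp [hFn, hG, g_one, Nat.zero_div]
    · have hnd : ¬ m ∣ j := fun hdvd => hj ⟨hdvd, h0⟩
      simp only [hFn, hG, if_neg h0, cl_eq_div_add_one hm1 hnd]
  have hsplit : ∑ j ∈ J, Fn j
      = ∑ j ∈ J, G j + ∑ j ∈ J.filter (fun j => m ∣ j ∧ j ≠ 0), (Fn j - G j) := by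
    have h1 : ∑ j ∈ J.filter (fun j => m ∣ j ∧ j ≠ 0), (Fn j - G j)
        = ∑ j ∈ J, (Fn j - G j) := by
      apply Finset.sum_filter_of_ne
      intro j _ hne
      by_contra hP
      exact hne (by rw [hFG j hP]; ring)
    rw [h1, ← Finset.sum_add_distrib]
    apply Finset.sum_congr rfl
    intro j _
    ring
  have hpart2 : ∑ j ∈ J.filter (fun j => m ∣ j ∧ j ≠ 0), (Fn j - G j) ≤ 1 - g m (d+1) := by
    set D := J.filter (fun j => m ∣ j ∧ j ≠ 0) with hD
    have hinj : ∀ x ∈ D, ∀ y ∈ D, x/m = y/m → x = y := by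
      intro x hx y hy hxy
      simp only [hD, Finset.mem_filter] at hx hy
      obtain ⟨-, hdx, -⟩ := hx
      obtain ⟨-, hdy, -⟩ := hy
      rw [← Nat.mul_div_cancel' hdx, ← Nat.mul_div_cancel' hdy, hxy]
    have hval : ∀ j ∈ D, Fn j - G j = g m (j/m) - g m (j/m + 1) := by
      intro j hjD
      simp only [hD, Finset.mem_filter] at hjD
      obtain ⟨hjJ, hdvd, h0⟩ := hjD
      obtain ⟨i, rfl⟩ := hdvd
      rw [Nat.mul_div_cancel_left i hm0]
      have : Fn (m * i) = g m i := by
        simp only [hFn, if_neg h0, cl_mul hm1 i]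
      rw [this]
      simp only [hG, Nat.mul_div_cancel_left i hm0]
    have himg : ∑ j ∈ D, (Fn j - G j) = ∑ i ∈ D.image (·/m), (g m i - g m (i+1)) := by
      rw [Finset.sum_image hinj]
      exact Finset.sum_congr rfl hval
    have hsub : D.image (·/m) ⊆ Finset.Ico 1 (d+1) := by
      intro i hi
      obtain ⟨j, hjD, rfl⟩ := Finset.mem_image.mp hi
      simp only [hD, Finset.mem_filter] at hjD
      obtain ⟨hjJ, hdvd, h0⟩ := hjD
      have hjN := (hJmem j hjJ).1
      obtain ⟨i, rfl⟩ := hdvd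
      rw [Nat.mul_div_cancel_left i hm0]
      simp only [Finset.mem_Ico]
      constructor
      · rcases Nat.eq_zero_or_pos i with h|h
        · subst h; simp at h0
        · exact h
      · have h6 : m*i < m*(d+1) := by omega
        exact Nat.lt_of_mul_lt_mul_left h6
    have htel : ∑ i ∈ Finset.Ico 1 (d+1), (g m i - g m (i+1)) = 1 - g m (d+1) := by
      rw [Finset.sum_Ico_eq_sum_range]
      have e : d + 1 - 1 = d := by simp
      rw [e]
      have hcongr : ∀ k ∈ Finset.range d, g m (1+k) - g m (1+k+1)
          = (fun t => g m (t+1)) k - (fun t => g m (t+1)) (k+1) := by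
        intro k _
        have e1 : 1+k = k+1 := Nat.add_comm 1 k
        show g m (1+k) - g m (1+k+1) = g m (k+1) - g m (k+1+1)
        rw [e1]
      rw [Finset.sum_congr rfl hcongr, Finset.sum_range_sub' (fun t => g m (t+1)) d]
      show g m (0+1) - g m (d+1) = 1 - g m (d+1)
      rw [Nat.zero_add, g_one]
    calc ∑ j ∈ D, (Fn j - G j) = ∑ i ∈ D.image (·/m), (g m i - g m (i+1)) := himg
      _ ≤ ∑ i ∈ Finset.Ico 1 (d+1), (g m i - g m (i+1)) := by
          apply Finset.sum_le_sum_of_subset_of_nonneg hsub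
          intro i hi _
          have h1 : 1 ≤ i := (Finset.mem_Ico.mp hi).1
          have := g_anti hm1 h1 (Nat.le_succ i)
          linarith
      _ = 1 - g m (d+1) := htel
  have hpart1 : ∑ j ∈ J, G j ≤ (Nat.totient m : ℝ) * (∑ i ∈ Finset.range d, g m (i+1))
      + (((N:ℝ)+1) - (m:ℝ)*(d:ℝ)) * g m (d+1) := by
    have hmaps : ∀ j ∈ J, j / m ∈ Finset.range (d+1) := by
      intro j hj
      have hjN := (hJmem j hj).1
      rw [Finset.mem_range, Nat.div_lt_iff_lt_mul hm0, Nat.mul_comm]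
      omega
    rw [← Finset.sum_fiberwise_of_maps_to hmaps G]
    have hfib_eq : ∀ i, ∑ j ∈ J.filter (fun j => j/m = i), G j
        = (((J.filter (fun j => j/m = i)).card : ℝ)) * g m (i+1) := by
      intro i
      have : ∀ j ∈ J.filter (fun j => j/m = i), G j = g m (i+1) := by
        intro j hj
        simp only [hG, (Finset.mem_filter.mp hj).2]
      rw [Finset.sum_congr rfl this, Finset.sum_const, nsmul_eq_mul]
    rw [Finset.sum_range_succ]
    have hlast : ∑ j ∈ J.filter (fun j => j/m = d), G j
        ≤ (((N:ℝ)+1) - (m:ℝ)*(d:ℝ)) * g m (d+1) := by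
      rw [hfib_eq d]
      apply mul_le_mul_of_nonneg_right _ (g_nonneg _)
      have hc := Jcard_last hm0 J hJmem (d := d)
      have : ((N + 1 - m * d : ℕ) : ℝ) = ((N:ℝ)+1) - (m:ℝ)*(d:ℝ) := by
        have : m * d ≤ N := by omega
        push_cast [Nat.cast_sub (by omega : m * d ≤ N + 1)]
        ring
      rw [← this]
      exact_mod_cast hc
    have hsmall : ∑ i ∈ Finset.range d, ∑ j ∈ J.filter (fun j => j/m = i), G j
        ≤ (Nat.totient m : ℝ) * (∑ i ∈ Finset.range d, g m (i+1)) := by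
      rw [Finset.mul_sum]
      apply Finset.sum_le_sum
      intro i hi
      rw [hfib_eq i]
      apply mul_le_mul_of_nonneg_right _ (g_nonneg _)
      have hc := Jcard_small hm0 J hJmem (by omega : m * d ≤ N) (Finset.mem_range.mp hi)
      exact_mod_cast hc
    linarith
  have hT : ∑ j ∈ J, Fn j ≤ ((N:ℝ)+1) * g m (d+1) := by
    rw [hsplit]
    have hcrux := crux hm2 d
    have hg0 := g_nonneg (m := m) (d+1)
    nlinarith [hpart1, hpart2, hcrux]
  rw [hd]
  have hNpos : (0:ℝ) < (N:ℝ)+1 := by positivity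
  have hfinal : ((N:ℝ)+1) * rho (N+1) m ≤ ((N:ℝ)+1) * g m (d+1) := by
    calc ((N:ℝ)+1) * rho (N+1) m ≤ ∑ k ∈ S, Fn (N-k) := step1
      _ = ∑ j ∈ J, Fn j := hreindex
      _ ≤ ((N:ℝ)+1) * g m (d+1) := hT
  exact le_of_mul_le_mul_left hfinal hNpos

end RhoAux2

theorem stmt_1 (m : ℕ) (hm : 0 < m) (hsf : Squarefree m) :
    ∀ n : ℕ, 1 ≤ n →
      rho n m ≤ ((⌈(n : ℝ) / m⌉ : ℝ)) ^ ((Nat.totient m : ℝ) / m - 1) := by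
  intro n hn
  rcases eq_or_lt_of_le (Nat.succ_le_of_lt hm) with h1 | h2
  · -- m = 1
    have hm1 : m = 1 := h1.symm
    subst hm1
    have he : ((Nat.totient 1 : ℝ) / ((1:ℕ):ℝ) - 1) = 0 := by
      simp [Nat.totient_one]
    rw [he, Real.rpow_zero]
    exact RhoAux.rho_le_one n 1
  · have hm2 : 2 ≤ m := h2
    have hmain := RhoAux2.main_ge2 hm2 n hn
    have hmR : (0:ℝ) < m := by exact_mod_cast hm
    have hceil : ⌈(n : ℝ) / m⌉ = (RhoAux2.cl m n : ℤ) := by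
      rw [Int.ceil_eq_iff]
      constructor
      · rw [lt_div_iff₀ hmR]
        have hnat := RhoAux2.m_mul_cl_le (by omega : 1 ≤ m) (n := n) hn
        have hnat2 : m * RhoAux2.cl m n < n + m := by
          have : 1 ≤ n + m := by omega
          omega
        have : ((m * RhoAux2.cl m n : ℕ) : ℝ) < ((n + m : ℕ) : ℝ) := by exact_mod_cast hnat2
        push_cast at this
        push_cast
        nlinarith [this]
      · rw [div_le_iff₀ hmR]
        have hnat := RhoAux2.le_m_mul_cl (by omega : 1 ≤ m) (n := n) hn
        have : ((n : ℕ) : ℝ) ≤ ((m * RhoAux2.cl m n : ℕ) : ℝ) := by exact_mod_cast hnat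
        push_cast at this
        push_cast
        nlinarith [this]
    have hcast : ((⌈(n : ℝ) / m⌉ : ℤ) : ℝ) = ((RhoAux2.cl m n : ℕ) : ℝ) := by
      rw [hceil]; push_cast; ring
    rw [hcast]
    simpa [RhoAux2.g, RhoAux2.al] using hmain
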